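/- With Q, S, A_n and a_n := A_n(0) as in the context, the ψ-Appell operator expansion holds: S⁻¹ = Σ_{n≥0} (a_n/n_ψ!)·∂_ψ^n, i.e. for every polynomial p ∈ K[X], S⁻¹(p) = Σ_{n=0}^{deg p} (a_n/n_ψ!)·∂_ψ^n(p). -/
import Mathlib


open Polynomial Finset

/-- With `Q`, `S`, `A n` and `a n := (A n).eval 0` as in the
context, the ψ-Appell operator expansion holds:
`S⁻¹ = Σ_{n≥0} (a n / n_ψ!) ∂_ψ^n`, i.e. for every `p ∈ K[X]`,
`S⁻¹ p = Σ_{n=0}^{deg p} (a n / n_ψ!) • ∂_ψ^n p`. -/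
theorem stmt7 {K : Type*} [Field K] [CharZero K]
    (ψ : ℕ → K) (hψ : ∀ n, ψ n ≠ 0)
    (nψ : ℕ → K) (hnψ0 : nψ 0 = 0)
    (hnψ : ∀ n : ℕ, 1 ≤ n → nψ n = ψ (n - 1) / ψ n)
    (hadm : ∀ n : ℕ, 1 ≤ n → nψ n ≠ 0)
    (nψfact : ℕ → K) (hfact0 : nψfact 0 = 1)
    (hfact : ∀ n : ℕ, nψfact (n + 1) = nψ (n + 1) * nψfact n)
    (D : Polynomial K →ₗ[K] Polynomial K)
    (hD : ∀ n : ℕ, D (X ^ (n + 1)) = nψ (n + 1) • X ^ n)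
    (hD1 : D 1 = 0)
    (q : ℕ → K) (hq1 : q 1 ≠ 0)
    (Q : Polynomial K →ₗ[K] Polynomial K)
    (hQ : ∀ p : Polynomial K,
      Q p = ∑ k ∈ Finset.range (p.natDegree + 1),
        (q (k + 1) / nψfact (k + 1)) • ((D ^ (k + 1)) p))
    (S : Polynomial K →ₗ[K] Polynomial K)
    (hS : ∀ p : Polynomial K,
      S p = ∑ k ∈ Finset.range (p.natDegree + 1),
        (q (k + 1) / nψfact (k + 1)) • ((D ^ k) p))
    (Sinv : Polynomial K →ₗ[K] Polynomial K)
    (hSinv₁ : ∀ p : Polynomial K, Sinv (S p) = p)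
    (hSinv₂ : ∀ p : Polynomial K, S (Sinv p) = p)
    (A : ℕ → Polynomial K)
    (hA : ∀ n : ℕ, A n = Sinv (X ^ n))
    (a : ℕ → K) (ha : ∀ n : ℕ, a n = (A n).eval 0) :
    ∀ p : Polynomial K,
      Sinv p = ∑ n ∈ Finset.range (p.natDegree + 1),
        (a n / nψfact n) • ((D ^ n) p) := by
  -- factorials are nonzero
  have hfactne : ∀ n, nψfact n ≠ 0 := by
    intro n
    induction n with
    | zero => rw [hfact0]; exact one_ne_zero
    | succ n ih =>
      rw [hfact]
      exact mul_ne_zero (hadm _ (Nat.succ_le_succ (Nat.zero_le n))) ih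
  -- D kills constants
  have hDC : ∀ c : K, D (C c) = 0 := by
    intro c
    have h1 : (C c : Polynomial K) = c • 1 := by rw [smul_eq_C_mul, mul_one]
    rw [h1, map_smul, hD1, smul_zero]
  -- iterated derivative of monomials
  have hDX : ∀ k n : ℕ, k ≤ n →
      (D ^ k) (X ^ n : Polynomial K) = (nψfact n / nψfact (n - k)) • X ^ (n - k) := by
    intro k
    induction k with
    | zero =>
      intro n _
      simp [div_self (hfactne n)]
    | succ k ih =>
      intro n hkn
      obtain ⟨m, rfl⟩ : ∃ m, n = m + 1 := ⟨n - 1, (Nat.succ_pred_eq_of_pos (lt_of_lt_of_le (Nat.succ_pos k) hkn)).symm⟩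
      have hk : k ≤ m := Nat.succ_le_succ_iff.mp hkn
      rw [pow_succ, Module.End.mul_apply, hD, map_smul, ih m hk, smul_smul]
      have : m + 1 - (k + 1) = m - k := by omega
      rw [this, hfact]
      congr 1
      field_simp
  -- iterated derivative kills low-degree monomials
  have hDXz : ∀ k n : ℕ, n < k → (D ^ k) (X ^ n : Polynomial K) = 0 := by
    intro k
    induction k with
    | zero => intro n hn; omega
    | succ k ih =>
      intro n hn
      rw [pow_succ', Module.End.mul_apply]
      rcases lt_or_eq_of_le (Nat.lt_succ_iff.mp hn) with h | h
      · rw [ih n h, map_zero]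
      · subst h
        rw [hDX n n le_rfl, Nat.sub_self, pow_zero, map_smul, hD1, smul_zero]
  -- iterated derivative kills any polynomial beyond its degree
  have hDz : ∀ (r : Polynomial K) (k : ℕ), r.natDegree < k → (D ^ k) r = 0 := by
    intro r k hk
    conv_lhs => rw [r.as_sum_range_C_mul_X_pow]
    rw [map_sum]
    refine Finset.sum_eq_zero fun i hi => ?_
    have hik : i < k := lt_of_lt_of_le (mem_range.mp hi) hk
    rw [← smul_eq_C_mul, map_smul, hDXz k i hik, smul_zero]
  -- coefficient vanishing for D
  have hDcoeff : ∀ (r : Polynomial K) (e : ℕ), r.natDegree ≤ e → (D r).coeff e = 0 := by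
    intro r e he
    conv_lhs => rw [r.as_sum_range_C_mul_X_pow]
    rw [map_sum, finset_sum_coeff]
    refine Finset.sum_eq_zero fun i hi => ?_
    have hie : i ≤ e := le_trans (Nat.lt_succ_iff.mp (mem_range.mp hi)) he
    rw [← smul_eq_C_mul, map_smul]
    cases i with
    | zero => rw [pow_zero, hD1, smul_zero, coeff_zero]
    | succ j =>
      rw [hD, coeff_smul, coeff_smul, coeff_X_pow, if_neg (by omega), smul_zero, smul_zero]
  -- D lowers degree (weakly)
  have hDdeg : ∀ r : Polynomial K, (D r).natDegree ≤ r.natDegree := by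
    intro r
    rw [natDegree_le_iff_coeff_eq_zero]
    intro N hN
    exact hDcoeff r N (le_of_lt hN)
  -- kernel of D is constants
  have hker : ∀ r : Polynomial K, D r = 0 → r = C (r.coeff 0) := by
    intro r hr
    by_cases h0 : r.natDegree = 0
    · exact r.eq_C_of_natDegree_eq_zero h0
    · exfalso
      obtain ⟨e, hd⟩ : ∃ e, r.natDegree = e + 1 := ⟨r.natDegree - 1, by omega⟩
      have hrne : r ≠ 0 := fun h => h0 (by rw [h, natDegree_zero])
      have hrw : r.eraseLead + C r.leadingCoeff * X ^ r.natDegree = r :=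
        r.eraseLead_add_C_mul_X_pow
      have h1 : (D r).coeff e = r.leadingCoeff * nψ (e + 1) := by
        conv_lhs => rw [← hrw]
        rw [map_add, coeff_add, hDcoeff r.eraseLead e
          (le_trans r.eraseLead_natDegree_le (by omega)), zero_add,
          ← smul_eq_C_mul, map_smul, hd, hD, coeff_smul, coeff_smul, coeff_X_pow,
          if_pos rfl]
        simp [mul_comm]
      rw [hr, coeff_zero] at h1
      exact (mul_ne_zero (leadingCoeff_ne_zero.mpr hrne)
        (hadm (e + 1) (Nat.succ_le_succ (Nat.zero_le e)))) h1.symm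
  -- S with extended summation range
  have hSext : ∀ (r : Polynomial K) (N : ℕ), r.natDegree ≤ N →
      S r = ∑ k ∈ Finset.range (N + 1), (q (k + 1) / nψfact (k + 1)) • ((D ^ k) r) := by
    intro r N hN
    rw [hS]
    refine Finset.sum_subset (by intro x hx; rw [mem_range] at *; omega) ?_
    intro k _ hk
    rw [mem_range, not_lt] at hk
    rw [hDz r k (by omega), smul_zero]
  -- S commutes with D
  have hSD : ∀ r : Polynomial K, S (D r) = D (S r) := by
    intro r
    rw [hSext (D r) r.natDegree (hDdeg r), hS r, map_sum]
    refine Finset.sum_congr rfl fun k _ => ?_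
    rw [map_smul]
    congr 1
    rw [← Module.End.mul_apply, ← pow_succ, pow_succ', Module.End.mul_apply]
  -- S is injective
  have hSinj : ∀ u v : Polynomial K, S u = S v → u = v := by
    intro u v h
    have := congrArg Sinv h
    rwa [hSinv₁, hSinv₁] at this
  -- Sinv commutes with D
  have hSinvD : ∀ r : Polynomial K, D (Sinv r) = Sinv (D r) := by
    intro r
    refine hSinj _ _ ?_
    rw [hSD, hSinv₂, hSinv₂]
  -- the key monomial expansion
  have hAm : ∀ m : ℕ, A m =
      ∑ n ∈ Finset.range (m + 1), (a n / nψfact n) • ((D ^ n) (X ^ m : Polynomial K)) := by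
    intro m
    induction m with
    | zero =>
      have hDA0 : D (A 0) = 0 := by
        rw [hA, hSinvD, pow_zero, hD1, map_zero]
      have h1 : A 0 = C (a 0) := by
        rw [ha, ← coeff_zero_eq_eval_zero]; exact hker _ hDA0
      rw [h1]
      simp [hfact0, smul_eq_C_mul]
    | succ m ih =>
      set R : Polynomial K :=
        ∑ n ∈ Finset.range (m + 2), (a n / nψfact n) • ((D ^ n) (X ^ (m + 1) : Polynomial K))
        with hR
      -- derivative of both sides
      have hDA : D (A (m + 1)) = nψ (m + 1) • A m := by
        rw [hA, hSinvD, hD, map_smul, ← hA]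
      have hDR : D R = nψ (m + 1) • A m := by
        rw [hR, map_sum]
        have h1 : ∀ n ∈ Finset.range (m + 2),
            D ((a n / nψfact n) • ((D ^ n) (X ^ (m + 1) : Polynomial K)))
              = nψ (m + 1) • ((a n / nψfact n) • ((D ^ n) (X ^ m : Polynomial K))) := by
          intro n _
          rw [map_smul, ← Module.End.mul_apply, ← pow_succ', pow_succ, Module.End.mul_apply,
            hD, map_smul, smul_comm]
        rw [Finset.sum_congr rfl h1, ← Finset.smul_sum, Finset.sum_range_succ,
          hDXz (m + 1) m (Nat.lt_succ_self m), smul_zero, add_zero, ← ih]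
      have hDdiff : D (A (m + 1) - R) = 0 := by
        rw [map_sub, hDA, hDR, sub_self]
      have hconst := hker _ hDdiff
      -- evaluate at 0
      have hevalR : R.eval 0 = a (m + 1) := by
        rw [hR, Finset.sum_range_succ]
        have h2 : ∀ n ∈ Finset.range (m + 1),
            ((a n / nψfact n) • ((D ^ n) (X ^ (m + 1) : Polynomial K))).eval 0 = 0 := by
          intro n hn
          rw [mem_range] at hn
          rw [hDX n (m + 1) (by omega), eval_smul, eval_smul, eval_pow, eval_X,
            zero_pow (by omega), smul_zero, smul_zero]
        rw [eval_add, eval_finset_sum, Finset.sum_congr rfl h2, Finset.sum_const_zero, zero_add,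
          hDX (m + 1) (m + 1) le_rfl, Nat.sub_self, pow_zero, hfact0, eval_smul, eval_smul,
          eval_one, smul_eq_mul, smul_eq_mul, mul_one, div_one,
          div_mul_cancel₀ _ (hfactne (m + 1))]
      have hc0 : (A (m + 1) - R).coeff 0 = 0 := by
        rw [coeff_zero_eq_eval_zero, eval_sub, hevalR, ← ha, sub_self]
      rw [hc0, map_zero, sub_eq_zero] at hconst
      exact hconst
  -- conclude by linearity
  intro p
  set N := p.natDegree with hN
  have hrep : p = ∑ i ∈ Finset.range (N + 1), p.coeff i • (X ^ i : Polynomial K) := by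
    conv_lhs => rw [p.as_sum_range_C_mul_X_pow]
    exact Finset.sum_congr rfl fun i _ => (smul_eq_C_mul _).symm
  calc Sinv p = ∑ i ∈ Finset.range (N + 1), p.coeff i • A i := by
        conv_lhs => rw [hrep]
        rw [map_sum]
        exact Finset.sum_congr rfl fun i _ => by rw [map_smul, ← hA]
    _ = ∑ i ∈ Finset.range (N + 1), ∑ n ∈ Finset.range (N + 1),
          p.coeff i • ((a n / nψfact n) • ((D ^ n) (X ^ i : Polynomial K))) := by
        refine Finset.sum_congr rfl fun i hi => ?_
        rw [mem_range] at hi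
        rw [hAm i, Finset.smul_sum]
        refine Finset.sum_subset (by intro x hx; rw [mem_range] at *; omega) ?_
        intro n _ hn
        rw [mem_range, not_lt] at hn
        rw [hDXz n i (by omega), smul_zero, smul_zero]
    _ = ∑ n ∈ Finset.range (N + 1), (a n / nψfact n) • ((D ^ n) p) := by
        rw [Finset.sum_comm]
        refine Finset.sum_congr rfl fun n _ => ?_
        conv_rhs => rw [hrep]
        rw [map_sum, Finset.smul_sum]
        refine Finset.sum_congr rfl fun i _ => ?_
        rw [map_smul, smul_comm]
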